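/- For every integer s ≥ 1, one has s! ≤ Θ(s+1) < (e − 1)·s!. -/
import Mathlib

/-- The theta splitting function: `Θ(1) = 0` and `Θ(s+1) = 1 + s·Θ(s)` for `s ≥ 1`. -/
def Theta : ℕ → ℕ
  | 0 => 0
  | 1 => 0
  | (s + 2) => 1 + (s + 1) * Theta (s + 1)

lemma theta_eq (s : ℕ) :
    (Theta (s + 1) : ℝ) = s.factorial * ∑ k ∈ Finset.range s, (1 : ℝ) / (k + 1).factorial := by
  induction s with
  | zero => simp [Theta]
  | succ n ih =>
    rw [show n + 1 + 1 = n + 2 from rfl, Theta]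
    push_cast
    rw [ih, Finset.sum_range_succ, Nat.factorial_succ]
    have h : ((n + 1).factorial : ℝ) ≠ 0 := by positivity
    push_cast
    field_simp
    ring

theorem factorial_le_theta_lt (s : ℕ) (hs : 1 ≤ s) :
    (s.factorial : ℝ) ≤ Theta (s + 1) ∧
      (Theta (s + 1) : ℝ) < (Real.exp 1 - 1) * s.factorial := by
  have hf : (0 : ℝ) < s.factorial := by positivity
  rw [theta_eq]
  constructor
  · have hm : 0 ∈ Finset.range s := Finset.mem_range.mpr (by omega)
    have h1 : (1 : ℝ) ≤ ∑ k ∈ Finset.range s, (1 : ℝ) / (k + 1).factorial := by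
      have := Finset.single_le_sum (f := fun k => (1 : ℝ) / (k + 1).factorial)
        (fun i _ => by positivity) hm
      simpa using this
    nlinarith
  · have key : ∑ k ∈ Finset.range s, (1 : ℝ) / (k + 1).factorial < Real.exp 1 - 1 := by
      have h1 : ∑ i ∈ Finset.range (s + 2), (1 : ℝ) ^ i / i.factorial ≤ Real.exp 1 :=
        Real.sum_le_exp_of_nonneg zero_le_one _
      simp only [one_pow] at h1
      have h2 : ∑ i ∈ Finset.range (s + 2), (1 : ℝ) / i.factorial
          = 1 + ∑ k ∈ Finset.range (s + 1), (1 : ℝ) / (k + 1).factorial := by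
        rw [Finset.sum_range_succ']; simp [add_comm]
      rw [h2, Finset.sum_range_succ] at h1
      have hpos : (0 : ℝ) < 1 / (s + 1).factorial := by positivity
      linarith
    calc _ < s.factorial * (Real.exp 1 - 1) := by
          exact mul_lt_mul_of_pos_left key hf
    _ = _ := by ring
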